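/- Let D = ℤ + Xℚ[X]. The set Xℚ[X] = {X·q(X) : q ∈ ℚ[X]} is a nonzero prime ideal of D that contains no irreducible element of D. -/

import Mathlib

open Polynomial

/-- `D = ℤ + Xℚ[X]` : the subring of `ℚ[X]` of polynomials with integer constant
coefficient. -/
noncomputable def ZplusXQX : Subring (Polynomial ℚ) where
  carrier := {f | ∃ n : ℤ, f.coeff 0 = (n : ℚ)}
  zero_mem' := ⟨0, by simp⟩
  one_mem' := ⟨1, by simp⟩
  add_mem' := by
    rintro f g ⟨m, hm⟩ ⟨n, hn⟩
    exact ⟨m + n, by simp [hm, hn]⟩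
  mul_mem' := by
    rintro f g ⟨m, hm⟩ ⟨n, hn⟩
    exact ⟨m * n, by simp [Polynomial.mul_coeff_zero, hm, hn]⟩
  neg_mem' := by
    rintro f ⟨m, hm⟩
    exact ⟨-m, by simp [hm]⟩

noncomputable def XQXideal : Ideal ZplusXQX where
  carrier := {f | (f : Polynomial ℚ).coeff 0 = 0}
  zero_mem' := by simp
  add_mem' := by
    intro f g hf hg
    simp only [Set.mem_setOf_eq] at *
    push_cast
    simp [hf, hg]
  smul_mem' := by
    intro c f hf
    simp only [Set.mem_setOf_eq, smul_eq_mul] at *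
    push_cast
    simp [Polynomial.mul_coeff_zero, hf]

/-- In `D = ℤ + Xℚ[X]`, the set `Xℚ[X]` is a nonzero prime ideal of `D` containing no
irreducible element of `D`. -/
theorem ZplusXQX_prime_ideal_without_atoms :
    ∃ I : Ideal ZplusXQX,
      (∀ f : ZplusXQX, f ∈ I ↔ ∃ q : Polynomial ℚ, (f : Polynomial ℚ) = Polynomial.X * q) ∧
      I ≠ ⊥ ∧ I.IsPrime ∧ ∀ f ∈ I, ¬ Irreducible f := by
  refine ⟨XQXideal, ?_, ?_, ?_, ?_⟩
  · intro f
    constructor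
    · intro hf
      have : Polynomial.X ∣ (f : Polynomial ℚ) := Polynomial.X_dvd_iff.mpr hf
      exact this
    · rintro ⟨q, hq⟩
      show (f : Polynomial ℚ).coeff 0 = 0
      rw [hq]; simp
  · intro h
    have hX : (⟨Polynomial.X, ⟨0, by simp⟩⟩ : ZplusXQX) ∈ XQXideal := by
      show (Polynomial.X : Polynomial ℚ).coeff 0 = 0
      simp
    rw [h] at hX
    simp only [Ideal.mem_bot] at hX
    have := congrArg (Subtype.val) hX
    simp at this
  · constructor
    · intro h
      have : (1 : ZplusXQX) ∈ XQXideal := h ▸ Submodule.mem_top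
      have h1 : ((1 : ZplusXQX) : Polynomial ℚ).coeff 0 = 0 := this
      simp at h1
    · intro f g hfg
      have h : ((f * g : ZplusXQX) : Polynomial ℚ).coeff 0 = 0 := hfg
      push_cast at h
      rw [Polynomial.mul_coeff_zero] at h
      rcases mul_eq_zero.mp h with h | h
      · exact Or.inl h
      · exact Or.inr h
  · intro f hf hirr
    have hf0 : ((f : Polynomial ℚ)).coeff 0 = 0 := hf
    set a : ZplusXQX := ⟨(2 : Polynomial ℚ), ⟨2, by simp⟩⟩ with ha
    have hbmem : (Polynomial.C (1/2 : ℚ) * (f : Polynomial ℚ)) ∈ ZplusXQX := by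
      exact ⟨0, by simp [Polynomial.mul_coeff_zero, hf0]⟩
    set b : ZplusXQX := ⟨Polynomial.C (1/2 : ℚ) * (f : Polynomial ℚ), hbmem⟩ with hb
    have hfab : f = a * b := by
      apply Subtype.ext
      push_cast
      show (f : Polynomial ℚ) = (2 : Polynomial ℚ) * (Polynomial.C (1/2 : ℚ) * f)
      rw [← mul_assoc]
      have h2 : (2 : Polynomial ℚ) * Polynomial.C (1/2 : ℚ) = 1 := by
        have : (2 : Polynomial ℚ) = Polynomial.C (2 : ℚ) := (map_ofNat Polynomial.C 2).symm
        rw [this, ← Polynomial.C_mul]; norm_num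
      rw [h2, one_mul]
    rcases hirr.isUnit_or_isUnit hfab with hu | hu
    · -- 2 is not a unit
      rcases hu with ⟨u, hu⟩
      have := congrArg (fun x : ZplusXQX => (x : Polynomial ℚ).coeff 0) (u.mul_inv)
      simp only [hu] at this
      push_cast at this
      rw [Polynomial.mul_coeff_zero] at this
      simp at this
      obtain ⟨n, hn⟩ := (↑u⁻¹ : ZplusXQX).2
      rw [hn] at this
      have : (2 * n : ℚ) = 1 := by
        have ha2 : (a : Polynomial ℚ).coeff 0 = 2 := by
          show (2 : Polynomial ℚ).coeff 0 = 2
          simp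
        rw [ha2] at this
        push_cast; linarith [this]
      have h2 : (2 * n : ℤ) = 1 := by exact_mod_cast this
      omega
    · -- b is not a unit: its coeff 0 is 0
      rcases hu with ⟨u, hu⟩
      have := congrArg (fun x : ZplusXQX => (x : Polynomial ℚ).coeff 0) (u.mul_inv)
      simp only [hu] at this
      push_cast at this
      rw [Polynomial.mul_coeff_zero] at this
      have hb0 : (b : Polynomial ℚ).coeff 0 = 0 := by
        show (Polynomial.C (1/2 : ℚ) * (f : Polynomial ℚ)).coeff 0 = 0
        simp [Polynomial.mul_coeff_zero, hf0]
      rw [hb0] at this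
      simp at this
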